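/- Let a, b : ℕ → ℝ be sequences satisfying 0 < a(n+1) < b(n+1) < a(n) < 1 and a(n) < b(n) < 1 for all n, with a(n) → 0 as n → ∞. Define Ω ⊆ ℝ² by Ω := ((0,1) × (0,1)) \ ⋃_n ([a(n), b(n)] × [1/2, 1]). Then, with σ := H¹ restricted to the boundary ∂Ω, one has σ(∂Ω) = ∞, and the set on which σ is locally infinite is exactly the segment {0} × [1/2, 1]; that is, { z ∈ ∂Ω : H¹(∂Ω ∩ B(z, r)) = ∞ for every r > 0 } = {0} × [1/2, 1]. -/

import Mathlib

open MeasureTheory Metric Set ENNReal NNReal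

namespace RP


noncomputable def phi (p : EuclideanSpace ℝ (Fin 2)) : ℝ × ℝ := (p 0, p 1)

noncomputable def psi (c : ℝ × ℝ) : EuclideanSpace ℝ (Fin 2) :=
  (WithLp.equiv 2 (Fin 2 → ℝ)).symm ![c.1, c.2]

lemma psi_apply_zero (c : ℝ × ℝ) : psi c 0 = c.1 := rfl
lemma psi_apply_one (c : ℝ × ℝ) : psi c 1 = c.2 := rfl

lemma phi_psi (c : ℝ × ℝ) : phi (psi c) = c := rfl

lemma psi_phi (p : EuclideanSpace ℝ (Fin 2)) : psi (phi p) = p := by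
  apply (WithLp.equiv 2 (Fin 2 → ℝ)).injective
  funext i
  fin_cases i <;> rfl

lemma coord_dist_le (p q : EuclideanSpace ℝ (Fin 2)) (i : Fin 2) :
    dist (p i) (q i) ≤ dist p q := by
  rw [EuclideanSpace.dist_eq]
  rw [show dist (p i) (q i) = Real.sqrt (dist (p i) (q i) ^ 2) from
    (Real.sqrt_sq dist_nonneg).symm]
  apply Real.sqrt_le_sqrt
  exact Finset.single_le_sum (f := fun j => dist (p j) (q j) ^ 2)
    (fun j _ => sq_nonneg _) (Finset.mem_univ i)

lemma lip_phi : LipschitzWith 1 phi := by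
  apply LipschitzWith.of_dist_le_mul
  intro p q
  rw [Prod.dist_eq]
  simp only [NNReal.coe_one, one_mul]
  exact max_le (coord_dist_le p q 0) (coord_dist_le p q 1)

lemma lip_psi : LipschitzWith 2 psi := by
  apply LipschitzWith.of_dist_le_mul
  intro c d
  have h2 : (0:ℝ) ≤ 2 * dist c d := by positivity
  rw [EuclideanSpace.dist_eq]
  rw [show ((2:ℝ≥0):ℝ) * dist c d = Real.sqrt ((2 * dist c d) ^ 2) by
    rw [Real.sqrt_sq h2]; norm_num]
  apply Real.sqrt_le_sqrt
  rw [Fin.sum_univ_two]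
  have h1 : dist (psi c 0) (psi d 0) ≤ dist c d := by
    rw [psi_apply_zero, psi_apply_zero, Prod.dist_eq]; exact le_max_left _ _
  have h1' : dist (psi c 1) (psi d 1) ≤ dist c d := by
    rw [psi_apply_one, psi_apply_one, Prod.dist_eq]; exact le_max_right _ _
  nlinarith [dist_nonneg (x := psi c 0) (y := psi d 0), dist_nonneg (x := psi c 1) (y := psi d 1),
    dist_nonneg (x := c) (y := d)]

noncomputable def e : EuclideanSpace ℝ (Fin 2) ≃ₜ ℝ × ℝ where
  toFun := phi
  invFun := psi
  left_inv := psi_phi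
  right_inv := phi_psi
  continuous_toFun := lip_phi.continuous
  continuous_invFun := lip_psi.continuous

lemma meas_phi_image (s : Set (EuclideanSpace ℝ (Fin 2))) :
    μH[(1:ℝ)] (phi '' s) ≤ μH[(1:ℝ)] s := by
  simpa using lip_phi.hausdorffMeasure_image_le zero_le_one s

lemma meas_psi_image (t : Set (ℝ × ℝ)) :
    μH[(1:ℝ)] (psi '' t) ≤ 2 * μH[(1:ℝ)] t := by
  have := lip_psi.hausdorffMeasure_image_le zero_le_one t
  simpa using this

lemma preimage_phi_eq (A : Set (ℝ × ℝ)) : phi ⁻¹' A = psi '' A := by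
  ext w
  constructor
  · intro hw
    exact ⟨phi w, hw, psi_phi w⟩
  · rintro ⟨c, hc, rfl⟩
    simpa [mem_preimage, phi_psi] using hc

lemma vert_seg_le (c x y : ℝ) :
    μH[(1:ℝ)] (({c} : Set ℝ) ×ˢ Icc x y) ≤ ENNReal.ofReal (y - x) := by
  have him : ({c} : Set ℝ) ×ˢ Icc x y = (fun t => (c, t)) '' Icc x y := by
    ext ⟨u, v⟩
    simp [Set.mem_prod, eq_comm, and_comm]
  rw [him]
  calc μH[(1:ℝ)] ((fun t => (c, t)) '' Icc x y)
      ≤ (1:ℝ≥0∞) ^ (1:ℝ) * μH[(1:ℝ)] (Icc x y) :=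
        (LipschitzWith.prodMk_left c).hausdorffMeasure_image_le zero_le_one _
    _ = ENNReal.ofReal (y - x) := by
        rw [ENNReal.one_rpow, one_mul, MeasureTheory.hausdorffMeasure_real, Real.volume_Icc]

lemma horiz_seg_le (c x y : ℝ) :
    μH[(1:ℝ)] (Icc x y ×ˢ ({c} : Set ℝ)) ≤ ENNReal.ofReal (y - x) := by
  have him : Icc x y ×ˢ ({c} : Set ℝ) = (fun t => (t, c)) '' Icc x y := by
    ext ⟨u, v⟩
    simp [Set.mem_prod, eq_comm, and_comm]
  rw [him]
  calc μH[(1:ℝ)] ((fun t => (t, c)) '' Icc x y)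
      ≤ (1:ℝ≥0∞) ^ (1:ℝ) * μH[(1:ℝ)] (Icc x y) :=
        (LipschitzWith.prodMk_right c).hausdorffMeasure_image_le zero_le_one _
    _ = ENNReal.ofReal (y - x) := by
        rw [ENNReal.one_rpow, one_mul, MeasureTheory.hausdorffMeasure_real, Real.volume_Icc]

lemma vert_seg_ge (c x y : ℝ) :
    ENNReal.ofReal (y - x) ≤ μH[(1:ℝ)] (({c} : Set ℝ) ×ˢ Icc x y) := by
  have him : (Prod.snd : ℝ × ℝ → ℝ) '' (({c} : Set ℝ) ×ˢ Icc x y) = Icc x y :=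
    Set.snd_image_prod (singleton_nonempty c) _
  have := LipschitzWith.prod_snd.hausdorffMeasure_image_le (X := ℝ × ℝ) (Y := ℝ)
    zero_le_one (({c} : Set ℝ) ×ˢ Icc x y)
  rw [him] at this
  calc ENNReal.ofReal (y - x) = μH[(1:ℝ)] (Icc x y) := by
        rw [MeasureTheory.hausdorffMeasure_real, Real.volume_Icc]
    _ ≤ _ := by simpa using this



structure Hyp (a b : ℕ → ℝ) : Prop where
  hpos : ∀ n, 0 < a (n + 1)
  hab : ∀ n, a (n + 1) < b (n + 1)
  hba : ∀ n, b (n + 1) < a n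
  ha1 : ∀ n, a n < 1
  hab0 : ∀ n, a n < b n
  hb1 : ∀ n, b n < 1
  hlim : Filter.Tendsto a Filter.atTop (nhds 0)

namespace Hyp

variable {a b : ℕ → ℝ}

lemma apos (h : Hyp a b) : ∀ n, 0 < a n
  | 0 => (h.hpos 0).trans ((h.hab 0).trans (h.hba 0))
  | n + 1 => h.hpos n

lemma bpos (h : Hyp a b) (n : ℕ) : 0 < b n := (h.apos n).trans (h.hab0 n)

lemma aanti (h : Hyp a b) : StrictAnti a :=
  strictAnti_nat_of_succ_lt fun n => (h.hab n).trans (h.hba n)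

lemma banti (h : Hyp a b) : StrictAnti b :=
  strictAnti_nat_of_succ_lt fun n => (h.hba n).trans (h.hab0 n)

lemma blim (h : Hyp a b) : Filter.Tendsto b Filter.atTop (nhds 0) := by
  have h1 : Filter.Tendsto (fun n => b (n + 1)) Filter.atTop (nhds 0) := by
    apply squeeze_zero (fun n => (h.bpos (n + 1)).le) (fun n => (h.hba n).le) h.hlim
  exact (Filter.tendsto_add_atTop_iff_nat 1).mp h1

end Hyp

def E (a b : ℕ → ℝ) : Set ℝ := {0} ∪ ⋃ n, Icc (a n) (b n)

def U : Set (ℝ × ℝ) := Ioo (0:ℝ) 1 ×ˢ Ioo (0:ℝ) 1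

def K (a b : ℕ → ℝ) : Set (ℝ × ℝ) := E a b ×ˢ Icc (1/2 : ℝ) 1

def Om (a b : ℕ → ℝ) : Set (ℝ × ℝ) :=
  U \ ⋃ n, (Icc (a n) (b n) ×ˢ Icc (1/2 : ℝ) 1)

variable {a b : ℕ → ℝ}

lemma E_subset (h : Hyp a b) : E a b ⊆ Icc 0 1 := by
  rintro x (rfl | hx)
  · exact ⟨le_refl 0, zero_le_one⟩
  · obtain ⟨n, hn⟩ := mem_iUnion.mp hx
    exact ⟨(h.apos n).le.trans hn.1, hn.2.trans (h.hb1 n).le⟩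

lemma E_closed (h : Hyp a b) : IsClosed (E a b) := by
  rw [← isOpen_compl_iff, isOpen_iff_forall_mem_open]
  intro x hx
  rcases lt_trichotomy x 0 with hx0 | rfl | hx0
  · refine ⟨Iio 0, fun y hy => ?_, isOpen_Iio, hx0⟩
    have hy' : y < 0 := mem_Iio.mp hy
    rintro (rfl | hyE)
    · exact absurd hy' (lt_irrefl 0)
    · obtain ⟨n, hn⟩ := mem_iUnion.mp hyE
      exact absurd ((h.apos n).trans_le hn.1) (not_lt.mpr hy'.le)
  · exact absurd (Or.inl rfl) hx
  · -- x > 0, x ∉ E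
    have hnotIcc : ∀ n, x ∉ Icc (a n) (b n) := fun n hn => hx (Or.inr (mem_iUnion.mpr ⟨n, hn⟩))
    rcases lt_or_ge (b 0) x with hb0 | hb0
    · refine ⟨Ioi (b 0), fun y hy => ?_, isOpen_Ioi, hb0⟩
      have hy' : b 0 < y := mem_Ioi.mp hy
      rintro (rfl | hyE)
      · exact absurd (h.bpos 0) (not_lt.mpr hy'.le)
      · obtain ⟨n, hn⟩ := mem_iUnion.mp hyE
        have : b n ≤ b 0 := h.banti.antitone (Nat.zero_le n)
        exact absurd (hn.2.trans this) (not_le.mpr hy')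
    · have hex : ∃ n, a n < x := by
        have := h.hlim.eventually_lt_const hx0
        obtain ⟨N, hN⟩ := this.exists
        exact ⟨N, hN⟩
      have han : a (Nat.find hex) < x := Nat.find_spec hex
      have hnpos : Nat.find hex ≠ 0 := by
        intro h0
        apply hnotIcc 0
        rw [h0] at han
        exact ⟨han.le, hb0⟩
      obtain ⟨m, hm⟩ := Nat.exists_eq_succ_of_ne_zero hnpos
      rw [hm] at han
      have ham : x ≤ a m := not_lt.mp (Nat.find_min hex (by omega))
      have ham' : x < a m := lt_of_le_of_ne ham (fun hxe => hnotIcc m ⟨hxe.ge, hxe.le.trans (h.hab0 m).le⟩)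
      have hbm : b (m + 1) < x := by
        rcases lt_or_ge (b (m + 1)) x with h' | h'
        · exact h'
        · exact absurd ⟨han.le, h'⟩ (hnotIcc (m + 1))
      refine ⟨Ioo (b (m + 1)) (a m), fun y hy => ?_, isOpen_Ioo, hbm, ham'⟩
      rintro (rfl | hyE)
      · exact absurd (h.bpos (m + 1)) (not_lt.mpr hy.1.le)
      · obtain ⟨k, hk⟩ := mem_iUnion.mp hyE
        rcases le_or_gt k m with hkm | hkm
        · have : a m ≤ a k := h.aanti.antitone hkm
          exact absurd (hy.2.trans_le this) (not_lt.mpr hk.1)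
        · have : b k ≤ b (m + 1) := h.banti.antitone hkm
          exact absurd ((hk.2.trans this)) (not_le.mpr hy.1)

lemma Om_eq (h : Hyp a b) : Om a b = U ∩ (K a b)ᶜ := by
  ext ⟨x, y⟩
  constructor
  · rintro ⟨hU, hS⟩
    refine ⟨hU, fun hK => ?_⟩
    obtain ⟨hxE, hy⟩ := hK
    rcases hxE with h0 | hxE
    · rw [mem_singleton_iff] at h0
      subst h0
      exact absurd (hU.1 : (0:ℝ) ∈ Ioo (0:ℝ) 1).1 (lt_irrefl 0)
    · obtain ⟨n, hn⟩ := mem_iUnion.mp hxE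
      exact hS (mem_iUnion.mpr ⟨n, ⟨hn, hy⟩⟩)
  · rintro ⟨hU, hK⟩
    refine ⟨hU, fun hS => ?_⟩
    obtain ⟨n, hn⟩ := mem_iUnion.mp hS
    exact hK ⟨Or.inr (mem_iUnion.mpr ⟨n, hn.1⟩), hn.2⟩

lemma K_closed (h : Hyp a b) : IsClosed (K a b) := (E_closed h).prod isClosed_Icc

lemma Om_open (h : Hyp a b) : IsOpen (Om a b) := by
  rw [Om_eq h]
  exact (isOpen_Ioo.prod isOpen_Ioo).inter (K_closed h).isOpen_compl

lemma frontier_Om_subset (h : Hyp a b) :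
    frontier (Om a b) ⊆ frontier U ∪ frontier (K a b) := by
  rw [Om_eq h]
  refine (frontier_inter_subset _ _).trans ?_
  rintro w (⟨hw, _⟩ | ⟨_, hw⟩)
  · exact Or.inl hw
  · exact Or.inr (by rwa [frontier_compl] at hw)

lemma frontier_U_mem {w : ℝ × ℝ} (hw : w ∈ frontier U) :
    w.1 ∈ Icc (0:ℝ) 1 ∧ w.2 ∈ Icc (0:ℝ) 1 ∧ (w.1 = 0 ∨ w.1 = 1 ∨ w.2 = 0 ∨ w.2 = 1) := by
  have hUopen : IsOpen U := isOpen_Ioo.prod isOpen_Ioo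
  rw [hUopen.frontier_eq] at hw
  have hcl : closure U ⊆ Icc (0:ℝ) 1 ×ˢ Icc (0:ℝ) 1 :=
    closure_minimal (Set.prod_mono Ioo_subset_Icc_self Ioo_subset_Icc_self)
      (isClosed_Icc.prod isClosed_Icc)
  have h1 := hcl hw.1
  have h2 : w ∉ U := hw.2
  refine ⟨h1.1, h1.2, ?_⟩
  by_contra hc
  push_neg at hc
  obtain ⟨c1, c2, c3, c4⟩ := hc
  exact h2 ⟨⟨h1.1.1.lt_of_ne (Ne.symm c1), h1.1.2.lt_of_ne c2⟩,
    ⟨h1.2.1.lt_of_ne (Ne.symm c3), h1.2.2.lt_of_ne c4⟩⟩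

lemma frontier_K_mem (h : Hyp a b) {w : ℝ × ℝ} (hw : w ∈ frontier (K a b)) :
    (w.2 ∈ Icc (1/2:ℝ) 1 ∧ (w.1 = 0 ∨ ∃ n, w.1 = a n ∨ w.1 = b n)) ∨
    (w.1 ∈ Icc (0:ℝ) 1 ∧ (w.2 = 1/2 ∨ w.2 = 1)) := by
  rw [(K_closed h).frontier_eq] at hw
  obtain ⟨⟨hx, hy⟩, hwint⟩ := hw
  rcases eq_or_lt_of_le hy.1 with he | hy1
  · exact Or.inr ⟨E_subset h hx, Or.inl he.symm⟩
  rcases eq_or_lt_of_le hy.2 with he | hy2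
  · exact Or.inr ⟨E_subset h hx, Or.inr he⟩
  refine Or.inl ⟨hy, ?_⟩
  rcases hx with h0 | hxu
  · exact Or.inl h0
  obtain ⟨n, hn⟩ := mem_iUnion.mp hxu
  rcases eq_or_lt_of_le hn.1 with he | hx1
  · exact Or.inr ⟨n, Or.inl he.symm⟩
  rcases eq_or_lt_of_le hn.2 with he | hx2
  · exact Or.inr ⟨n, Or.inr he⟩
  exfalso
  apply hwint
  have hsub : Ioo (a n) (b n) ×ˢ Ioo (1/2:ℝ) 1 ⊆ K a b :=
    Set.prod_mono (fun t ht => Or.inr (mem_iUnion.mpr ⟨n, Ioo_subset_Icc_self ht⟩))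
      Ioo_subset_Icc_self
  exact interior_maximal hsub (isOpen_Ioo.prod isOpen_Ioo) ⟨⟨hx1, hx2⟩, ⟨hy1, hy2⟩⟩

lemma wall_subset_frontier (h : Hyp a b) (n : ℕ) :
    (({a n} : Set ℝ) ×ˢ Icc (1/2:ℝ) 1) ⊆ frontier (Om a b) := by
  rintro ⟨x, t⟩ ⟨hx, ht⟩
  rw [mem_singleton_iff] at hx
  subst hx
  rw [(Om_open h).frontier_eq]
  have ht1 : (1/2:ℝ) ≤ t := ht.1
  have ht2 : t ≤ 1 := ht.2
  constructor
  · rw [Metric.mem_closure_iff]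
    intro ε hε
    set δ := min ε 1 / 4 with hδ
    have hδ0 : 0 < δ := by positivity
    have hδε : δ ≤ ε / 4 := by
      have := min_le_left ε 1
      rw [hδ]; linarith
    have hδ1 : δ ≤ 1/4 := by
      have := min_le_right ε 1
      rw [hδ]; linarith
    set M := max (b (n+1)) (a n - δ) with hM
    have hMlt : M < a n := max_lt (h.hba n) (by linarith)
    set x₀ := (M + a n)/2 with hx₀
    have hx₀M : M < x₀ := by rw [hx₀]; linarith
    have hx₀a : x₀ < a n := by rw [hx₀]; linarith
    have hx₀b : b (n+1) < x₀ := lt_of_le_of_lt (le_max_left _ _) hx₀M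
    have hx₀pos : 0 < x₀ := (h.bpos (n+1)).trans hx₀b
    have hx₀close : a n - x₀ ≤ δ / 2 := by
      have : a n - δ ≤ M := le_max_right _ _
      rw [hx₀]; linarith
    refine ⟨(x₀, t - δ), ⟨⟨⟨hx₀pos, hx₀a.trans (h.ha1 n)⟩, ⟨show (0:ℝ) < t - δ by linarith, show t - δ < 1 by linarith⟩⟩, ?_⟩, ?_⟩
    · intro hmem
      obtain ⟨m, hm⟩ := mem_iUnion.mp hmem
      rcases le_or_gt m n with hmn | hmn
      · have hma : a n ≤ a m := h.aanti.antitone hmn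
        exact absurd hm.1.1 (not_le.mpr (hx₀a.trans_le hma))
      · have hmb : b m ≤ b (n+1) := h.banti.antitone hmn
        exact absurd (hm.1.2.trans hmb) (not_le.mpr hx₀b)
    · rw [Prod.dist_eq]
      have d1 : dist (a n) x₀ < ε := by
        rw [Real.dist_eq, abs_of_pos (by linarith)]
        linarith
      have d2 : dist t (t - δ) < ε := by
        rw [Real.dist_eq, show t - (t - δ) = δ by ring, abs_of_pos hδ0]
        linarith
      exact max_lt d1 d2
  · intro hOm
    exact hOm.2 (mem_iUnion.mpr ⟨n, ⟨⟨le_refl _, (h.hab0 n).le⟩, ht⟩⟩)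

lemma zero_mem_frontier (h : Hyp a b) {y : ℝ} (hy : y ∈ Icc (1/2:ℝ) 1) :
    ((0:ℝ), y) ∈ frontier (Om a b) := by
  have htd : Filter.Tendsto (fun n => ((a n, y) : ℝ × ℝ)) Filter.atTop (nhds (0, y)) :=
    h.hlim.prodMk_nhds tendsto_const_nhds
  exact isClosed_frontier.mem_of_tendsto htd
    (Filter.Eventually.of_forall fun n => wall_subset_frontier h n ⟨rfl, hy⟩)

lemma measure_ball_top (h : Hyp a b) {y : ℝ} (hy : y ∈ Icc (1/2:ℝ) 1) {r : ℝ} (hr : 0 < r) :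
    μH[(1:ℝ)] (frontier (Om a b) ∩ ball ((0:ℝ), y) r) = ⊤ := by
  set ρ := min r 1 / 4 with hρ
  have hρ0 : 0 < ρ := by positivity
  have hρr : ρ ≤ r / 4 := by
    have := min_le_left r 1; rw [hρ]; linarith
  have hρ1 : ρ ≤ 1 / 4 := by
    have := min_le_right r 1; rw [hρ]; linarith
  set c := if y + ρ ≤ 1 then y else y - ρ with hc
  have hI1 : Icc c (c + ρ) ⊆ Icc (1/2:ℝ) 1 := by
    intro t ht
    rw [hc] at ht
    split_ifs at ht with hcase
    · exact ⟨le_trans hy.1 ht.1, le_trans ht.2 hcase⟩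
    · push_neg at hcase
      constructor
      · have : 1 - ρ < y := by linarith
        have := ht.1
        linarith
      · have := ht.2
        have := hy.2
        linarith
  have hI2 : ∀ t ∈ Icc c (c + ρ), dist t y ≤ ρ := by
    intro t ht
    rw [hc] at ht
    rw [Real.dist_eq, abs_le]
    split_ifs at ht with hcase
    · exact ⟨by linarith [ht.1], by linarith [ht.2]⟩
    · exact ⟨by linarith [ht.1], by linarith [ht.2]⟩
  obtain ⟨N, hN⟩ := (Filter.eventually_atTop.mp (h.hlim.eventually_lt_const hr))
  set V : ℕ → Set (ℝ × ℝ) := fun k => ({a (N + k)} : Set ℝ) ×ˢ Icc c (c + ρ) with hV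
  have hVsub : ∀ k, V k ⊆ frontier (Om a b) ∩ ball ((0:ℝ), y) r := by
    rintro k ⟨x, t⟩ ⟨hx, ht⟩
    rw [mem_singleton_iff] at hx
    subst hx
    refine ⟨wall_subset_frontier h (N + k) ⟨rfl, hI1 ht⟩, ?_⟩
    rw [mem_ball, Prod.dist_eq]
    apply max_lt
    · rw [Real.dist_eq, sub_zero, abs_of_pos (h.apos (N + k))]
      exact hN (N + k) (Nat.le_add_right N k)
    · exact lt_of_le_of_lt (hI2 t ht) (by linarith)
  have hVdisj : Pairwise (Function.onFun Disjoint V) := by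
    intro k l hkl
    rw [Function.onFun, Set.disjoint_left]
    rintro ⟨x, t⟩ ⟨hx1, _⟩ ⟨hx2, _⟩
    rw [mem_singleton_iff] at hx1 hx2
    have : a (N + k) = a (N + l) := hx1 ▸ hx2
    have := h.aanti.injective this
    omega
  have hVmeas : ∀ k, MeasurableSet (V k) := fun k =>
    (isClosed_singleton.prod isClosed_Icc).measurableSet
  have hVge : ∀ k, ENNReal.ofReal ρ ≤ μH[(1:ℝ)] (V k) := by
    intro k
    have h1 : ENNReal.ofReal (c + ρ - c) ≤ μH[(1:ℝ)] (V k) := vert_seg_ge (a (N + k)) c (c + ρ)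
    simp only [add_sub_cancel_left] at h1
    exact h1
  have htop : (⊤ : ℝ≥0∞) ≤ μH[(1:ℝ)] (⋃ k, V k) := by
    rw [measure_iUnion hVdisj hVmeas]
    calc (⊤ : ℝ≥0∞) = ∑' _ : ℕ, ENNReal.ofReal ρ :=
          (ENNReal.tsum_const_eq_top_of_ne_zero (by simp [hρ0])).symm
      _ ≤ ∑' k, μH[(1:ℝ)] (V k) := ENNReal.tsum_le_tsum hVge
  exact top_le_iff.mp (htop.trans (measure_mono (iUnion_subset hVsub)))

def Sk (a b : ℕ → ℝ) (N : ℕ) : Set (ℝ × ℝ) :=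
  (({0} : Set ℝ) ×ˢ Icc (0:ℝ) 1) ∪ (({1} : Set ℝ) ×ˢ Icc (0:ℝ) 1) ∪
  (Icc (0:ℝ) 1 ×ˢ ({0} : Set ℝ)) ∪ (Icc (0:ℝ) 1 ×ˢ ({1} : Set ℝ)) ∪
  (Icc (0:ℝ) 1 ×ˢ ({1/2} : Set ℝ)) ∪
  (⋃ n ∈ Finset.range N,
    ((({a n} : Set ℝ) ×ˢ Icc (1/2:ℝ) 1) ∪ (({b n} : Set ℝ) ×ˢ Icc (1/2:ℝ) 1)))

lemma Sk_finite (N : ℕ) : μH[(1:ℝ)] (Sk a b N) < ⊤ := by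
  have hv : ∀ c x y : ℝ, μH[(1:ℝ)] (({c} : Set ℝ) ×ˢ Icc x y) < ⊤ :=
    fun c x y => lt_of_le_of_lt (vert_seg_le c x y) ENNReal.ofReal_lt_top
  have hh : ∀ c x y : ℝ, μH[(1:ℝ)] (Icc x y ×ˢ ({c} : Set ℝ)) < ⊤ :=
    fun c x y => lt_of_le_of_lt (horiz_seg_le c x y) ENNReal.ofReal_lt_top
  have hb : μH[(1:ℝ)] (⋃ n ∈ Finset.range N,
      ((({a n} : Set ℝ) ×ˢ Icc (1/2:ℝ) 1) ∪ (({b n} : Set ℝ) ×ˢ Icc (1/2:ℝ) 1))) < ⊤ := by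
    refine lt_of_le_of_lt (measure_biUnion_finset_le _ _) ?_
    refine ENNReal.sum_lt_top.mpr fun n _ => ?_
    refine lt_of_le_of_lt (measure_union_le _ _) ?_
    exact ENNReal.add_lt_top.mpr ⟨hv _ _ _, hv _ _ _⟩
  unfold Sk
  exact measure_union_lt_top (measure_union_lt_top (measure_union_lt_top
    (measure_union_lt_top (measure_union_lt_top (hv _ _ _) (hv _ _ _)) (hh _ _ _))
    (hh _ _ _)) (hh _ _ _)) hb

lemma finite_away (h : Hyp a b) {z : ℝ × ℝ} (hz : z ∈ frontier (Om a b))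
    (hzn : ¬(z.1 = 0 ∧ z.2 ∈ Icc (1/2:ℝ) 1)) :
    ∃ r > 0, μH[(1:ℝ)] (frontier (Om a b) ∩ ball z r) < ⊤ := by
  obtain ⟨x, y⟩ := z
  have hcoord : x ∈ Icc (0:ℝ) 1 ∧ y ∈ Icc (0:ℝ) 1 := by
    rcases frontier_Om_subset h hz with hU | hK
    · obtain ⟨h1, h2, _⟩ := frontier_U_mem hU
      exact ⟨h1, h2⟩
    · rcases frontier_K_mem h hK with ⟨hy', hx'⟩ | ⟨hx', hy'⟩
      · refine ⟨?_, ⟨by linarith [hy'.1], hy'.2⟩⟩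
        rcases hx' with rfl | ⟨n, rfl | rfl⟩
        · exact ⟨le_refl 0, zero_le_one⟩
        · exact ⟨(h.apos n).le, (h.ha1 n).le⟩
        · exact ⟨(h.bpos n).le, (h.hb1 n).le⟩
      · refine ⟨hx', ?_⟩
        rcases hy' with rfl | rfl
        · norm_num
        · norm_num
  rcases eq_or_lt_of_le hcoord.1.1 with hx0 | hx0
  · -- x = 0, so y < 1/2
    have hy12 : y < 1/2 := by
      by_contra hcon
      push_neg at hcon
      exact hzn ⟨hx0.symm, hcon, hcoord.2.2⟩
    refine ⟨1/2 - y, by linarith, ?_⟩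
    refine lt_of_le_of_lt (measure_mono ?_) (Sk_finite (a := a) (b := b) 0)
    rintro w ⟨hwf, hwb⟩
    have hwy : w.2 < 1/2 := by
      have h1 : dist w.2 y ≤ dist w (x, y) := by
        rw [Prod.dist_eq]; exact le_max_right _ _
      have h2 : dist w (x, y) < 1/2 - y := mem_ball.mp hwb
      have h3 := abs_lt.mp (lt_of_le_of_lt (Real.dist_eq w.2 y ▸ h1) h2)
      linarith [h3.2]
    rcases frontier_Om_subset h hwf with hU | hK
    · obtain ⟨h1, h2, hcases⟩ := frontier_U_mem hU
      simp only [Sk, Set.mem_union]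
      have e1 : w.1 = 0 → w ∈ ({0} : Set ℝ) ×ˢ Icc (0:ℝ) 1 := fun e => ⟨e, h2⟩
      have e2 : w.1 = 1 → w ∈ ({1} : Set ℝ) ×ˢ Icc (0:ℝ) 1 := fun e => ⟨e, h2⟩
      have e3 : w.2 = 0 → w ∈ Icc (0:ℝ) 1 ×ˢ ({0} : Set ℝ) := fun e => ⟨h1, e⟩
      have e4 : w.2 = 1 → w ∈ Icc (0:ℝ) 1 ×ˢ ({1} : Set ℝ) := fun e => ⟨h1, e⟩
      rcases hcases with e | e | e | e
      · exact Or.inl (Or.inl (Or.inl (Or.inl (Or.inl (e1 e)))))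
      · exact Or.inl (Or.inl (Or.inl (Or.inl (Or.inr (e2 e)))))
      · exact Or.inl (Or.inl (Or.inl (Or.inr (e3 e))))
      · exact Or.inl (Or.inl (Or.inr (e4 e)))
    · exfalso
      rcases frontier_K_mem h hK with ⟨hy', _⟩ | ⟨_, hy'⟩
      · linarith [hy'.1]
      · rcases hy' with e | e <;> rw [e] at hwy <;> linarith
  · -- 0 < x
    obtain ⟨N, hN⟩ := Filter.eventually_atTop.mp (h.blim.eventually_lt_const (by linarith : (0:ℝ) < x/2))
    refine ⟨x/2, by linarith, ?_⟩
    refine lt_of_le_of_lt (measure_mono ?_) (Sk_finite (a := a) (b := b) N)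
    rintro w ⟨hwf, hwb⟩
    have hwx : x/2 < w.1 := by
      have h1 : dist w.1 x ≤ dist w (x, y) := by
        rw [Prod.dist_eq]; exact le_max_left _ _
      have h2 : dist w (x, y) < x/2 := mem_ball.mp hwb
      have h3 := abs_lt.mp (lt_of_le_of_lt (Real.dist_eq w.1 x ▸ h1) h2)
      linarith [h3.1]
    simp only [Sk, Set.mem_union]
    rcases frontier_Om_subset h hwf with hU | hK
    · obtain ⟨h1, h2, hcases⟩ := frontier_U_mem hU
      have e1 : w.1 = 0 → w ∈ ({0} : Set ℝ) ×ˢ Icc (0:ℝ) 1 := fun e => ⟨e, h2⟩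
      have e2 : w.1 = 1 → w ∈ ({1} : Set ℝ) ×ˢ Icc (0:ℝ) 1 := fun e => ⟨e, h2⟩
      have e3 : w.2 = 0 → w ∈ Icc (0:ℝ) 1 ×ˢ ({0} : Set ℝ) := fun e => ⟨h1, e⟩
      have e4 : w.2 = 1 → w ∈ Icc (0:ℝ) 1 ×ˢ ({1} : Set ℝ) := fun e => ⟨h1, e⟩
      rcases hcases with e | e | e | e
      · exact Or.inl (Or.inl (Or.inl (Or.inl (Or.inl (e1 e)))))
      · exact Or.inl (Or.inl (Or.inl (Or.inl (Or.inr (e2 e)))))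
      · exact Or.inl (Or.inl (Or.inl (Or.inr (e3 e))))
      · exact Or.inl (Or.inl (Or.inr (e4 e)))
    · rcases frontier_K_mem h hK with ⟨hy', hx'⟩ | ⟨hx', hy'⟩
      · rcases hx' with e0 | ⟨n, en⟩
        · rw [e0] at hwx; linarith
        · have hnN : n < N := by
            by_contra hge
            push_neg at hge
            have hbn : b n < x/2 := hN n hge
            have han : a n < x/2 := lt_of_lt_of_le (h.hab0 n) hbn.le
            rcases en with e | e <;> rw [e] at hwx <;> linarith
          refine Or.inr (mem_iUnion₂.mpr ⟨n, Finset.mem_range.mpr hnN, ?_⟩)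
          rcases en with e | e
          · exact Or.inl ⟨e, hy'⟩
          · exact Or.inr ⟨e, hy'⟩
      · have h1 : w.1 ∈ Icc (0:ℝ) 1 := hx'
        have e4 : w.2 = 1 → w ∈ Icc (0:ℝ) 1 ×ˢ ({1} : Set ℝ) := fun e => ⟨h1, e⟩
        have e5 : w.2 = 1/2 → w ∈ Icc (0:ℝ) 1 ×ˢ ({1/2} : Set ℝ) := fun e => ⟨h1, e⟩
        rcases hy' with e | e
        · exact Or.inl (Or.inr (e5 e))
        · exact Or.inl (Or.inl (Or.inr (e4 e)))

lemma phi_surj : Function.Surjective phi := fun c => ⟨psi c, phi_psi c⟩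

end RP

open RP in
/-- The "rooms and passages" example: for `Ω = (0,1)² \ ⋃_n [aₙ,bₙ] × [1/2,1]` with
`0 < aₙ₊₁ < bₙ₊₁ < aₙ < 1`, `aₙ < bₙ < 1` and `aₙ → 0`, the measure `σ = H¹|_{∂Ω}`
satisfies `σ(∂Ω) = ∞`, and the set on which `σ` is locally infinite is exactly
`{0} × [1/2, 1]`. -/
theorem rooms_and_passages_example
    (a b : ℕ → ℝ)
    (hpos : ∀ n, 0 < a (n + 1))
    (hab : ∀ n, a (n + 1) < b (n + 1))
    (hba : ∀ n, b (n + 1) < a n)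
    (ha1 : ∀ n, a n < 1)
    (hab0 : ∀ n, a n < b n)
    (hb1 : ∀ n, b n < 1)
    (hlim : Filter.Tendsto a Filter.atTop (nhds 0))
    (Ω : Set (EuclideanSpace ℝ (Fin 2)))
    (hΩ : Ω = {p : EuclideanSpace ℝ (Fin 2) | p 0 ∈ Ioo (0 : ℝ) 1 ∧ p 1 ∈ Ioo (0 : ℝ) 1} \
      ⋃ n : ℕ, {p : EuclideanSpace ℝ (Fin 2) |
        p 0 ∈ Icc (a n) (b n) ∧ p 1 ∈ Icc (1 / 2 : ℝ) 1}) :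
    μH[(1 : ℝ)] (frontier Ω) = ⊤ ∧
      {z ∈ frontier Ω | ∀ r > (0 : ℝ), μH[(1 : ℝ)] (frontier Ω ∩ ball z r) = ⊤} =
        {p : EuclideanSpace ℝ (Fin 2) | p 0 = 0 ∧ p 1 ∈ Icc (1 / 2 : ℝ) 1} := by
  have h : Hyp a b := ⟨hpos, hab, hba, ha1, hab0, hb1, hlim⟩
  have hpre : Ω = e ⁻¹' (Om a b) := by
    rw [hΩ]
    ext p
    simp only [Om, U, Set.mem_preimage, Set.mem_diff, Set.mem_prod, Set.mem_iUnion,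
      Set.mem_setOf_eq, not_exists]
    exact Iff.rfl
  have hfr : frontier Ω = e ⁻¹' (frontier (Om a b)) := by
    rw [hpre, ← Homeomorph.preimage_frontier]
  have hset : {z ∈ frontier Ω | ∀ r > (0 : ℝ), μH[(1 : ℝ)] (frontier Ω ∩ ball z r) = ⊤} =
      {p : EuclideanSpace ℝ (Fin 2) | p 0 = 0 ∧ p 1 ∈ Icc (1 / 2 : ℝ) 1} := by
    ext z
    simp only [Set.mem_setOf_eq, Set.mem_sep_iff]
    constructor
    · rintro ⟨hzf, hloc⟩
      have hzf' : ((z 0, z 1) : ℝ × ℝ) ∈ frontier (Om a b) := by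
        rw [hfr] at hzf
        exact hzf
      by_contra hc
      obtain ⟨r, hr, hfin⟩ := finite_away h hzf' hc
      have hsub : frontier Ω ∩ ball z r ⊆
          phi ⁻¹' (frontier (Om a b) ∩ ball ((z 0, z 1) : ℝ × ℝ) r) := by
        rintro w ⟨hwf, hwb⟩
        refine ⟨by rw [hfr] at hwf; exact hwf, ?_⟩
        have hd := lip_phi.dist_le_mul w z
        rw [NNReal.coe_one, one_mul] at hd
        exact mem_ball.mpr (lt_of_le_of_lt hd (mem_ball.mp hwb))
      have hle : μH[(1:ℝ)] (frontier Ω ∩ ball z r) ≤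
          2 * μH[(1:ℝ)] (frontier (Om a b) ∩ ball ((z 0, z 1) : ℝ × ℝ) r) := by
        refine le_trans (measure_mono hsub) ?_
        rw [preimage_phi_eq]
        exact meas_psi_image _
      rw [hloc r hr] at hle
      have hlt : 2 * μH[(1:ℝ)] (frontier (Om a b) ∩ ball ((z 0, z 1) : ℝ × ℝ) r) < ⊤ :=
        ENNReal.mul_lt_top (by norm_num) hfin
      exact absurd (top_le_iff.mp hle).symm (ne_of_lt hlt).symm
    · rintro ⟨hz0, hz1⟩
      have hzf' : ((z 0, z 1) : ℝ × ℝ) ∈ frontier (Om a b) := by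
        rw [hz0]
        exact zero_mem_frontier h hz1
      refine ⟨by rw [hfr]; exact hzf', fun r hr => ?_⟩
      have hA : μH[(1:ℝ)] (frontier (Om a b) ∩ ball ((z 0, z 1) : ℝ × ℝ) (r/2)) = ⊤ := by
        rw [hz0]
        exact measure_ball_top h hz1 (half_pos hr)
      have hsub : phi ⁻¹' (frontier (Om a b) ∩ ball ((z 0, z 1) : ℝ × ℝ) (r/2)) ⊆
          frontier Ω ∩ ball z r := by
        rintro w ⟨hwf, hwb⟩
        refine ⟨by rw [hfr]; exact hwf, ?_⟩
        rw [mem_ball] at hwb ⊢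
        have heq : dist w z = dist (psi (phi w)) (psi (phi z)) := by
          rw [psi_phi, psi_phi]
        have h2 := lip_psi.dist_le_mul (phi w) (phi z)
        have h3 : dist (phi w) (phi z) < r/2 := hwb
        rw [heq]
        calc dist (psi (phi w)) (psi (phi z)) ≤ 2 * dist (phi w) (phi z) := by
              simpa using h2
          _ < 2 * (r/2) := by linarith
          _ = r := by ring
      refine top_le_iff.mp ?_
      calc (⊤ : ℝ≥0∞) = μH[(1:ℝ)] (frontier (Om a b) ∩ ball ((z 0, z 1) : ℝ × ℝ) (r/2)) :=
            hA.symm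
        _ = μH[(1:ℝ)] (phi '' (phi ⁻¹' (frontier (Om a b) ∩ ball ((z 0, z 1) : ℝ × ℝ) (r/2)))) := by
            rw [Set.image_preimage_eq _ phi_surj]
        _ ≤ μH[(1:ℝ)] (phi ⁻¹' (frontier (Om a b) ∩ ball ((z 0, z 1) : ℝ × ℝ) (r/2))) :=
            meas_phi_image _
        _ ≤ μH[(1:ℝ)] (frontier Ω ∩ ball z r) := measure_mono hsub
  refine ⟨?_, hset⟩
  have hz : psi ((0 : ℝ), (3/4 : ℝ)) ∈
      {p : EuclideanSpace ℝ (Fin 2) | p 0 = 0 ∧ p 1 ∈ Icc (1 / 2 : ℝ) 1} := by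
    refine ⟨psi_apply_zero _, ?_⟩
    rw [psi_apply_one]
    norm_num
  rw [← hset] at hz
  obtain ⟨hzf, hloc⟩ := hz
  have h1 := hloc 1 one_pos
  exact top_le_iff.mp (h1 ▸ measure_mono inter_subset_left)
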